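/- For every r > 0 and every s ∈ ℝ, the principal-series spherical function value given by the integral formula satisfies |(√2/π) · r · ∫₀¹ cos(s·r·x)/√(cosh r − cosh(r·x)) dx| ≤ (r + 1)·e^{−r/2}. (Harish-Chandra bound: the L²-spectrum of the distance-r averaging operator A_r on the hyperbolic plane is bounded by (r+1)e^{−r/2}.) -/

import Mathlib

open Real

lemma aux_convexOn_sinh : ConvexOn ℝ (Set.Ici (0:ℝ)) Real.sinh := by
  apply convexOn_of_deriv2_nonneg (convex_Ici 0) Real.continuous_sinh.continuousOn
    Real.differentiable_sinh.differentiableOn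
  · rw [Real.deriv_sinh]
    exact Real.differentiable_cosh.differentiableOn
  · intro x hx
    have h2 : deriv^[2] Real.sinh x = Real.sinh x := by
      simp [Function.iterate_succ, Real.deriv_sinh, Real.deriv_cosh]
    rw [h2]
    have : (0:ℝ) < x := by simpa using hx
    exact Real.sinh_nonneg_iff.2 this.le

lemma aux_sinh_mul_le {x u : ℝ} (hx0 : 0 ≤ x) (hx1 : x ≤ 1) (hu : 0 ≤ u) :
    Real.sinh (x * u) ≤ x * Real.sinh u := by
  have h := aux_convexOn_sinh.2 (Set.mem_Ici.2 hu) (Set.mem_Ici.2 (le_refl (0:ℝ)))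
    hx0 (by linarith : (0:ℝ) ≤ 1 - x) (by ring)
  simpa [Real.sinh_zero] using h

lemma aux_cosh_eq (t : ℝ) : Real.cosh t = 2 * Real.sinh (t / 2) ^ 2 + 1 := by
  have h1 := Real.cosh_two_mul (t / 2)
  have h2 := Real.cosh_sq (t / 2)
  have : (2 : ℝ) * (t / 2) = t := by ring
  rw [this] at h1
  linarith

/-- Key inequality: `cosh (r x) - 1 ≤ x² (cosh r - 1)` for `x ∈ [0,1]`. -/
lemma aux_key {r x : ℝ} (hr : 0 < r) (hx0 : 0 ≤ x) (hx1 : x ≤ 1) :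
    (Real.cosh r - 1) * (1 - x ^ 2) ≤ Real.cosh r - Real.cosh (r * x) := by
  have hs : Real.sinh (x * (r / 2)) ≤ x * Real.sinh (r / 2) :=
    aux_sinh_mul_le hx0 hx1 (by positivity)
  have hs0 : 0 ≤ Real.sinh (x * (r / 2)) := Real.sinh_nonneg_iff.2 (by positivity)
  have hsq : Real.sinh (x * (r / 2)) ^ 2 ≤ (x * Real.sinh (r / 2)) ^ 2 := by
    exact pow_le_pow_left₀ hs0 hs 2
  have h1 : Real.cosh (r * x) = 2 * Real.sinh (x * (r / 2)) ^ 2 + 1 := by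
    have := aux_cosh_eq (r * x)
    have hrw : r * x / 2 = x * (r / 2) := by ring
    rwa [hrw] at this
  have h2 : Real.cosh r = 2 * Real.sinh (r / 2) ^ 2 + 1 := aux_cosh_eq r
  nlinarith [Real.sinh_nonneg_iff.2 (by positivity : (0:ℝ) ≤ r / 2)]

lemma aux_integrable_one_div_sqrt :
    IntervalIntegrable (fun x : ℝ => 1 / Real.sqrt (1 - x ^ 2))
      MeasureTheory.volume 0 1 := by
  have h1 : IntervalIntegrable (fun x : ℝ => x ^ (-(1/2) : ℝ))
      MeasureTheory.volume 0 1 :=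
    intervalIntegral.intervalIntegrable_rpow' (by norm_num)
  have h2 : IntervalIntegrable (fun x : ℝ => (1 - x) ^ (-(1/2) : ℝ))
      MeasureTheory.volume 0 1 := by
    simpa using (h1.comp_sub_left 1).symm
  rw [intervalIntegrable_iff] at h2 ⊢
  refine MeasureTheory.Integrable.mono h2 ?_ ?_
  · apply Measurable.aestronglyMeasurable
    apply Measurable.div measurable_const
    exact (Real.continuous_sqrt.comp (by continuity)).measurable
  · rw [Set.uIoc_of_le (zero_le_one' ℝ)]
    refine (MeasureTheory.ae_restrict_iff' measurableSet_Ioc).2 ?_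
    filter_upwards with x hx
    obtain ⟨hx0, hx1⟩ := hx
    have h1x : 0 ≤ 1 - x := by linarith
    have hrw : (1 - x) ^ (-(1/2) : ℝ) = 1 / Real.sqrt (1 - x) := by
      rw [Real.rpow_neg h1x, Real.sqrt_eq_rpow]; norm_num
    rw [hrw]
    have hle : Real.sqrt (1 - x) ≤ Real.sqrt (1 - x ^ 2) :=
      Real.sqrt_le_sqrt (by nlinarith)
    have hb0 : 0 ≤ 1 / Real.sqrt (1 - x) := by positivity
    rw [Real.norm_eq_abs, Real.norm_eq_abs, abs_of_nonneg (by positivity),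
      abs_of_nonneg hb0]
    rcases eq_or_lt_of_le hx1 with h | h
    · subst h
      norm_num
    · have hpos : 0 < Real.sqrt (1 - x) := Real.sqrt_pos.2 (by linarith)
      exact one_div_le_one_div_of_le hpos hle

lemma aux_integral_one_div_sqrt :
    ∫ x in (0:ℝ)..1, 1 / Real.sqrt (1 - x ^ 2) = π / 2 := by
  have h : ∫ x in (0:ℝ)..1, 1 / Real.sqrt (1 - x ^ 2)
      = Real.arcsin 1 - Real.arcsin 0 := by
    apply intervalIntegral.integral_eq_sub_of_hasDerivAt_of_le zero_le_one
      Real.continuous_arcsin.continuousOn ?_ aux_integrable_one_div_sqrt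
    intro x hx
    exact Real.hasDerivAt_arcsin (by linarith [hx.1]) (ne_of_lt hx.2)
  rw [h, Real.arcsin_one, Real.arcsin_zero, sub_zero]

/-- **Harish-Chandra bound.** For every `r > 0` and every `s : ℝ`, the value of the
principal-series spherical function of the hyperbolic plane at distance `r`, given by the
integral formula `(√2/π) · r · ∫₀¹ cos(s·r·x)/√(cosh r − cosh(r·x)) dx`, is bounded in
absolute value by `(r + 1)·e^{−r/2}`. -/
theorem spherical_function_principal_bound (r : ℝ) (hr : 0 < r) (s : ℝ) :
    |(Real.sqrt 2 / π) * r *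
        ∫ x in (0:ℝ)..1, Real.cos (s * r * x) / Real.sqrt (Real.cosh r - Real.cosh (r * x))| ≤
      (r + 1) * Real.exp (-r / 2) := by
  have hπ : 0 < π := Real.pi_pos
  have hc1 : (1:ℝ) < Real.cosh r := by
    have := Real.cosh_lt_cosh (x := 0) (y := r)
    rw [Real.cosh_zero] at this
    exact this.2 (by simpa [abs_of_pos hr] using hr)
  have hc1pos : 0 < Real.cosh r - 1 := by linarith
  set c : ℝ := 1 / Real.sqrt (Real.cosh r - 1) with hc
  have hcpos : 0 < c := by positivity
  -- the dominating function
  set g : ℝ → ℝ := fun x => c * (1 / Real.sqrt (1 - x ^ 2)) with hg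
  have hgint : IntervalIntegrable g MeasureTheory.volume 0 1 :=
    aux_integrable_one_div_sqrt.const_mul c
  have hbound : ∀ᵐ t ∂MeasureTheory.volume.restrict (Set.uIoc (0:ℝ) 1),
      ‖Real.cos (s * r * t) / Real.sqrt (Real.cosh r - Real.cosh (r * t))‖ ≤ g t := by
    rw [Set.uIoc_of_le (zero_le_one' ℝ)]
    refine (MeasureTheory.ae_restrict_iff' measurableSet_Ioc).2 ?_
    filter_upwards with t ht
    obtain ⟨ht0, ht1⟩ := ht
    have hgt : g t = 1 / Real.sqrt ((Real.cosh r - 1) * (1 - t ^ 2)) := by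
      simp only [hg]
      rw [Real.sqrt_mul hc1pos.le, hc, div_mul_div_comm, one_mul]
    rw [hgt]
    have hkey := aux_key hr ht0.le ht1
    rcases eq_or_lt_of_le ht1 with h | h
    · subst h
      norm_num
    · have hP : 0 < (Real.cosh r - 1) * (1 - t ^ 2) :=
        mul_pos hc1pos (by nlinarith : (0:ℝ) < 1 - t ^ 2)
      have hPs : 0 < Real.sqrt ((Real.cosh r - 1) * (1 - t ^ 2)) := Real.sqrt_pos.2 hP
      have hDs : Real.sqrt ((Real.cosh r - 1) * (1 - t ^ 2))
          ≤ Real.sqrt (Real.cosh r - Real.cosh (r * t)) := Real.sqrt_le_sqrt hkey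
      rw [Real.norm_eq_abs, abs_div,
        abs_of_nonneg (Real.sqrt_nonneg (Real.cosh r - Real.cosh (r * t)))]
      exact div_le_div₀ zero_le_one (Real.abs_cos_le_one _) hPs hDs
  have hnorm := intervalIntegral.norm_integral_le_abs_of_norm_le hbound hgint
  have hgval : ∫ t in (0:ℝ)..1, g t = c * (π / 2) := by
    rw [hg, intervalIntegral.integral_const_mul, aux_integral_one_div_sqrt]
  rw [hgval, Real.norm_eq_abs, abs_of_nonneg (by positivity : (0:ℝ) ≤ c * (π / 2))] at hnorm
  -- combine
  have hS : 0 < Real.sinh (r / 2) := Real.sinh_pos_iff.2 (by linarith)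
  have hsqrt : Real.sqrt (Real.cosh r - 1) = Real.sqrt 2 * Real.sinh (r / 2) := by
    have h1 : Real.cosh r - 1 = 2 * Real.sinh (r / 2) ^ 2 := by
      have := aux_cosh_eq r; linarith
    rw [h1, Real.sqrt_mul (by norm_num : (0:ℝ) ≤ 2), Real.sqrt_sq hS.le]
  have habs : |(Real.sqrt 2 / π) * r *
      ∫ x in (0:ℝ)..1, Real.cos (s * r * x) / Real.sqrt (Real.cosh r - Real.cosh (r * x))|
      ≤ (Real.sqrt 2 / π) * r * (c * (π / 2)) := by
    rw [abs_mul, abs_of_nonneg (by positivity : (0:ℝ) ≤ Real.sqrt 2 / π * r)]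
    exact mul_le_mul_of_nonneg_left hnorm (by positivity)
  have heq : (Real.sqrt 2 / π) * r * (c * (π / 2)) = r / (2 * Real.sinh (r / 2)) := by
    rw [hc, hsqrt]
    have hs2 : (0:ℝ) < Real.sqrt 2 := by positivity
    field_simp
  rw [heq] at habs
  refine habs.trans ?_
  -- final elementary inequality
  have hexp : Real.exp (-r / 2) * (2 * Real.sinh (r / 2)) = 1 - Real.exp (-r) := by
    have h1 : Real.exp (-r / 2) * Real.exp (r / 2) = 1 := by
      rw [← Real.exp_add, show -r / 2 + r / 2 = 0 by ring, Real.exp_zero]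
    have h2 : Real.exp (-r / 2) * Real.exp (-(r / 2)) = Real.exp (-r) := by
      rw [← Real.exp_add]; congr 1; ring
    rw [Real.sinh_eq]
    calc Real.exp (-r / 2) * (2 * ((Real.exp (r / 2) - Real.exp (-(r / 2))) / 2))
        = Real.exp (-r / 2) * Real.exp (r / 2)
          - Real.exp (-r / 2) * Real.exp (-(r / 2)) := by ring
      _ = 1 - Real.exp (-r) := by rw [h1, h2]
  rw [div_le_iff₀ (by positivity : (0:ℝ) < 2 * Real.sinh (r / 2))]
  have h1 : (r + 1) * Real.exp (-r) ≤ 1 := by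
    have h2 : r + 1 ≤ Real.exp r := Real.add_one_le_exp r
    have h3 : (r + 1) * Real.exp (-r) ≤ Real.exp r * Real.exp (-r) :=
      mul_le_mul_of_nonneg_right h2 (Real.exp_pos _).le
    rwa [← Real.exp_add, add_neg_cancel, Real.exp_zero] at h3
  calc r ≤ (r + 1) * (1 - Real.exp (-r)) := by nlinarith [Real.exp_pos (-r)]
    _ = (r + 1) * (Real.exp (-r / 2) * (2 * Real.sinh (r / 2))) := by rw [hexp]
    _ = (r + 1) * Real.exp (-r / 2) * (2 * Real.sinh (r / 2)) := by ring
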